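/- Let f : ℝ³ → ℝ be differentiable and nowhere zero (a function of p = (p₀,p₁,p₂)), let V : ℝ² → ℝ be differentiable, and set l(q,p) = (∂f/∂p₁)(p)·q₂ − (∂f/∂p₂)(p)·q₁. On ℝ⁶ with coordinates (q₀,q₁,q₂,p₀,p₁,p₂), define the Hamiltonian H(q,p) = −p₀² + p₁² + p₂² + e^{4q₀}·V(q₁,q₂), the matrix Ω(q,p) = (1/f(p)) · [[0,0,0,−1,0,0],[0,0,0,0,−1,0],[0,0,0,0,0,−1],[1,0,0,0,0,0],[0,1,0,0,0,l/f],[0,0,1,0,−l/f,0]], and the vector field X_H(q,p) = (2p₀f, −(2p₁f + e^{4q₀}·l·∂V/∂q₂), −(2p₂f − e^{4q₀}·l·∂V/∂q₁), 4e^{4q₀}·f·V, e^{4q₀}·f·∂V/∂q₁, e^{4q₀}·f·∂V/∂q₂). Then for every x ∈ ℝ⁶ and every w ∈ ℝ⁶: X_H(x)ᵀ · Ω(x) · w = DH(x)(w). That is, X_H is the Hamiltonian vector field of H with respect to the deformed symplectic form; in particular DH(x)(X_H(x)) = 0, so X_H is tangent to the constraint surface H = 0. -/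

import Mathlib

open Matrix

/-- The closure-condition function `l(q,p) = (∂f/∂p₁)(p)·q₂ − (∂f/∂p₂)(p)·q₁` on the phase
space `ℝ⁶` with coordinates `(q₀,q₁,q₂,p₀,p₁,p₂)`. -/
noncomputable def lfun (f : (Fin 3 → ℝ) → ℝ) (x : Fin 6 → ℝ) : ℝ :=
  fderiv ℝ f ![x 3, x 4, x 5] (Pi.single 1 1) * x 2 -
    fderiv ℝ f ![x 3, x 4, x 5] (Pi.single 2 1) * x 1

/-- The Hamiltonian constraint of the Bianchi models in Misner variables,
`H = −p₀² + p₁² + p₂² + e^{4q₀}·V(q₁,q₂)`. -/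
noncomputable def Hfun (V : (Fin 2 → ℝ) → ℝ) (x : Fin 6 → ℝ) : ℝ :=
  -(x 3) ^ 2 + (x 4) ^ 2 + (x 5) ^ 2 + Real.exp (4 * x 0) * V ![x 1, x 2]

/-- Matrix of the deformed symplectic form of the GUP Bianchi model in Misner variables. -/
noncomputable def OmegaB (f : (Fin 3 → ℝ) → ℝ) (x : Fin 6 → ℝ) : Matrix (Fin 6) (Fin 6) ℝ :=
  (f ![x 3, x 4, x 5])⁻¹ •
    !![0, 0, 0, -1, 0, 0;
       0, 0, 0, 0, -1, 0;
       0, 0, 0, 0, 0, -1;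
       1, 0, 0, 0, 0, 0;
       0, 1, 0, 0, 0, lfun f x / f ![x 3, x 4, x 5];
       0, 0, 1, 0, -(lfun f x / f ![x 3, x 4, x 5]), 0]

/-- The deformed Hamiltonian vector field of the GUP Bianchi model. -/
noncomputable def XHfun (f : (Fin 3 → ℝ) → ℝ) (V : (Fin 2 → ℝ) → ℝ) (x : Fin 6 → ℝ) :
    Fin 6 → ℝ :=
  let fp := f ![x 3, x 4, x 5]
  let l := lfun f x
  let dV1 := fderiv ℝ V ![x 1, x 2] (Pi.single 0 1)
  let dV2 := fderiv ℝ V ![x 1, x 2] (Pi.single 1 1)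
  ![2 * x 3 * fp,
    -(2 * x 4 * fp + Real.exp (4 * x 0) * l * dV2),
    -(2 * x 5 * fp - Real.exp (4 * x 0) * l * dV1),
    4 * Real.exp (4 * x 0) * fp * V ![x 1, x 2],
    Real.exp (4 * x 0) * fp * dV1,
    Real.exp (4 * x 0) * fp * dV2]

@[simp] lemma vec6_zero {α : Type*} (a b c d e g : α) : ![a,b,c,d,e,g] (0:Fin 6) = a := rfl
@[simp] lemma vec6_one {α : Type*} (a b c d e g : α) : ![a,b,c,d,e,g] (1:Fin 6) = b := rfl
@[simp] lemma vec6_two {α : Type*} (a b c d e g : α) : ![a,b,c,d,e,g] (2:Fin 6) = c := rfl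
@[simp] lemma vec6_three {α : Type*} (a b c d e g : α) : ![a,b,c,d,e,g] (3:Fin 6) = d := rfl
@[simp] lemma vec6_four {α : Type*} (a b c d e g : α) : ![a,b,c,d,e,g] (4:Fin 6) = e := rfl
@[simp] lemma vec6_five {α : Type*} (a b c d e g : α) : ![a,b,c,d,e,g] (5:Fin 6) = g := rfl

lemma fderiv_Hfun_apply (V : (Fin 2 → ℝ) → ℝ) (hV : Differentiable ℝ V)
    (x w : Fin 6 → ℝ) :
    fderiv ℝ (Hfun V) x w =
      -(2 * x 3 * w 3) + 2 * x 4 * w 4 + 2 * x 5 * w 5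
        + 4 * Real.exp (4 * x 0) * V ![x 1, x 2] * w 0
        + Real.exp (4 * x 0) *
            (fderiv ℝ V ![x 1, x 2] (Pi.single 0 1) * w 1
              + fderiv ℝ V ![x 1, x 2] (Pi.single 1 1) * w 2) := by
  set L : (Fin 6 → ℝ) →L[ℝ] (Fin 2 → ℝ) :=
    ContinuousLinearMap.pi
      ![ContinuousLinearMap.proj (R := ℝ) (φ := fun _ : Fin 6 => ℝ) 1,
        ContinuousLinearMap.proj (R := ℝ) (φ := fun _ : Fin 6 => ℝ) 2] with hLdef
  have hL : ∀ y : Fin 6 → ℝ, L y = ![y 1, y 2] := by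
    intro y; funext i; fin_cases i <;> rfl
  have h3 : HasFDerivAt (fun y : Fin 6 → ℝ => (y 3) ^ 2)
      ((x 3) • ContinuousLinearMap.proj (R := ℝ) (φ := fun _ : Fin 6 => ℝ) 3
        + (x 3) • ContinuousLinearMap.proj (R := ℝ) (φ := fun _ : Fin 6 => ℝ) 3) x := by
    have hp := (ContinuousLinearMap.proj (R := ℝ) (φ := fun _ : Fin 6 => ℝ) 3).hasFDerivAt
      (x := x)
    refine (hp.mul hp).congr_of_eventuallyEq ?_
    filter_upwards with y; simp [pow_two]
  have h4 : HasFDerivAt (fun y : Fin 6 → ℝ => (y 4) ^ 2)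
      ((x 4) • ContinuousLinearMap.proj (R := ℝ) (φ := fun _ : Fin 6 => ℝ) 4
        + (x 4) • ContinuousLinearMap.proj (R := ℝ) (φ := fun _ : Fin 6 => ℝ) 4) x := by
    have hp := (ContinuousLinearMap.proj (R := ℝ) (φ := fun _ : Fin 6 => ℝ) 4).hasFDerivAt
      (x := x)
    refine (hp.mul hp).congr_of_eventuallyEq ?_
    filter_upwards with y; simp [pow_two]
  have h5 : HasFDerivAt (fun y : Fin 6 → ℝ => (y 5) ^ 2)
      ((x 5) • ContinuousLinearMap.proj (R := ℝ) (φ := fun _ : Fin 6 => ℝ) 5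
        + (x 5) • ContinuousLinearMap.proj (R := ℝ) (φ := fun _ : Fin 6 => ℝ) 5) x := by
    have hp := (ContinuousLinearMap.proj (R := ℝ) (φ := fun _ : Fin 6 => ℝ) 5).hasFDerivAt
      (x := x)
    refine (hp.mul hp).congr_of_eventuallyEq ?_
    filter_upwards with y; simp [pow_two]
  have hexp : HasFDerivAt (fun y : Fin 6 → ℝ => Real.exp (4 * y 0))
      (Real.exp (4 * x 0) • (4 : ℝ) •
        ContinuousLinearMap.proj (R := ℝ) (φ := fun _ : Fin 6 => ℝ) 0) x :=
    (((ContinuousLinearMap.proj (R := ℝ) (φ := fun _ : Fin 6 => ℝ) 0).hasFDerivAt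
      (x := x)).const_mul (4 : ℝ)).exp
  have hVc : HasFDerivAt (fun y : Fin 6 → ℝ => V ![y 1, y 2])
      ((fderiv ℝ V ![x 1, x 2]).comp L) x := by
    have h := ((hV (L x)).hasFDerivAt).comp x L.hasFDerivAt
    rw [hL x] at h
    refine h.congr_of_eventuallyEq ?_
    filter_upwards with y
    simp only [Function.comp_apply, hL y]
  have hmul := hexp.mul hVc
  have H := ((h3.neg.add h4).add h5).add hmul
  have hfd : fderiv ℝ (Hfun V) x = _ := H.fderiv
  rw [hfd]
  have hdec : (![w 1, w 2] : Fin 2 → ℝ)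
      = w 1 • (Pi.single 0 1 : Fin 2 → ℝ) + w 2 • (Pi.single 1 1 : Fin 2 → ℝ) := by
    funext i; fin_cases i <;> simp
  simp only [ContinuousLinearMap.add_apply, ContinuousLinearMap.neg_apply,
    ContinuousLinearMap.smul_apply, ContinuousLinearMap.comp_apply,
    ContinuousLinearMap.proj_apply, hL w, hdec, map_add, _root_.map_smul, smul_eq_mul]
  ring


/-- `X_H` is the Hamiltonian vector field of `H` with respect to the deformed symplectic
form: `X_H(x)ᵀ·Ω(x)·w = DH(x)(w)` for all `x, w`; in particular `DH(x)(X_H(x)) = 0`, so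
`X_H` is tangent to the constraint surface `H = 0`. -/
theorem stmt_16 (f : (Fin 3 → ℝ) → ℝ) (hf : Differentiable ℝ f) (hf0 : ∀ p, f p ≠ 0)
    (V : (Fin 2 → ℝ) → ℝ) (hV : Differentiable ℝ V) :
    (∀ x w : Fin 6 → ℝ,
      XHfun f V x ⬝ᵥ (OmegaB f x).mulVec w = fderiv ℝ (Hfun V) x w) ∧
    ∀ x : Fin 6 → ℝ, fderiv ℝ (Hfun V) x (XHfun f V x) = 0 := by
  have main : ∀ x w : Fin 6 → ℝ,
      XHfun f V x ⬝ᵥ (OmegaB f x).mulVec w = fderiv ℝ (Hfun V) x w := by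
    intro x w
    rw [fderiv_Hfun_apply V hV x w]
    have hf' := hf0 ![x 3, x 4, x 5]
    simp only [XHfun, OmegaB, Matrix.mulVec, dotProduct, Fin.sum_univ_six,
      Matrix.smul_apply, Matrix.of_apply, vec6_zero, vec6_one, vec6_two, vec6_three,
      vec6_four, vec6_five, smul_eq_mul]
    field_simp
    ring
  refine ⟨main, fun x => ?_⟩
  rw [fderiv_Hfun_apply V hV x (XHfun f V x)]
  simp only [XHfun, vec6_zero, vec6_one, vec6_two, vec6_three, vec6_four, vec6_five]
  ring
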